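/- Let n ≥ 2 and K ≥ 3. For every vector (a,b) ∈ ℂ^{2n} with (a,b) ≠ 0, there exist upper unitriangular complex n×n matrices A₁,…,A_K and symmetric complex n×n matrices Z₁,…,Z_K such that the tuple ((A₁,Z₁),…,(A_K,Z_K)) does not lie in S_K and the last row of the alternating product Ψ_K = M⁻(A₁,Z₁)·M⁺(A₂,Z₂)·⋯ (whose k-th factor is M⁻(A_k,Z_k) for k odd and M⁺(A_k,Z_k) for k even) equals (a,b). In other words, the restriction of Φ_K to the complement of S_K is surjective onto ℂ^{2n}∖{0}. -/

import Mathlib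

open Matrix

/-- `M⁻(A,Z) = [[Iₙ,0],[Z,Iₙ]]·[[A⁻ᵀ,0],[0,A]]`. -/
noncomputable def MnegAZ {n : ℕ} (A Z : Matrix (Fin n) (Fin n) ℂ) :
    Matrix (Fin n ⊕ Fin n) (Fin n ⊕ Fin n) ℂ :=
  Matrix.fromBlocks 1 0 Z 1 * Matrix.fromBlocks (Aᵀ)⁻¹ 0 0 A

/-- `M⁺(A,Z) = [[Iₙ,Z],[0,Iₙ]]·[[A⁻¹,0],[0,Aᵀ]]`. -/
noncomputable def MposAZ {n : ℕ} (A Z : Matrix (Fin n) (Fin n) ℂ) :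
    Matrix (Fin n ⊕ Fin n) (Fin n ⊕ Fin n) ℂ :=
  Matrix.fromBlocks 1 Z 0 1 * Matrix.fromBlocks A⁻¹ 0 0 Aᵀ

/-- Upper triangular with all diagonal entries `1`. -/
def IsUpperUnitriangular {n : ℕ} (A : Matrix (Fin n) (Fin n) ℂ) : Prop :=
  (∀ i, A i i = 1) ∧ ∀ i j : Fin n, j < i → A i j = 0

/-- The `n`-th standard basis vector `eₙ` of `ℂⁿ`. -/
def en (n : ℕ) : Fin n → ℂ := fun i => if (i : ℕ) = n - 1 then 1 else 0

section Helpers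

lemma vecMul_vecMulVec {n : ℕ} (c u v : Fin n → ℂ) :
    c ᵥ* vecMulVec u v = (c ⬝ᵥ u) • v := by
  ext j
  simp [vecMul, vecMulVec, dotProduct, Finset.sum_mul, mul_assoc]

lemma exists_symm_vecMul {n : ℕ} (c : Fin n → ℂ) (hc : c ≠ 0) (d : Fin n → ℂ) :
    ∃ Z : Matrix (Fin n) (Fin n) ℂ, Z.IsSymm ∧ c ᵥ* Z = d := by
  obtain ⟨i, hi⟩ : ∃ i, c i ≠ 0 := Function.ne_iff.mp hc
  set p : Fin n → ℂ := Pi.single i 1 with hp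
  refine ⟨(c i)⁻¹ • (vecMulVec d p + vecMulVec p d)
      + (-(c ⬝ᵥ d) * (c i)⁻¹ * (c i)⁻¹) • vecMulVec p p, ?_, ?_⟩
  · unfold Matrix.IsSymm
    simp only [transpose_add, transpose_smul, vecMulVec]
    ext x y
    simp [Matrix.transpose_apply, Matrix.add_apply]
    ring
  · have hsm : ∀ (r : ℂ) (M : Matrix (Fin n) (Fin n) ℂ), c ᵥ* (r • M) = r • (c ᵥ* M) := by
      intro r M
      ext j
      simp [vecMul, dotProduct, Finset.mul_sum, mul_left_comm]
    have hcp : c ⬝ᵥ p = c i := by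
      simp [hp, dotProduct, Pi.single_apply, mul_ite]
    rw [vecMul_add, hsm, hsm, vecMul_add, vecMul_vecMulVec,
      vecMul_vecMulVec, vecMul_vecMulVec, hcp]
    ext j
    simp [hp, Pi.single_apply]
    by_cases h : j = i
    · subst h; field_simp; ring
    · simp [h]; field_simp

lemma prod_head3 {M : Type*} [Monoid M] {m : ℕ} (f : Fin (3 + m) → M)
    (hf : ∀ k : Fin (3 + m), 3 ≤ (k : ℕ) → f k = 1) :
    (List.ofFn f).prod
      = f ⟨0, by omega⟩ * f ⟨1, by omega⟩ * f ⟨2, by omega⟩ := by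
  rw [List.ofFn_add, List.prod_append]
  have h1 : (List.ofFn fun j : Fin m => f (Fin.natAdd 3 j)).prod = 1 := by
    apply List.prod_eq_one
    intro x hx
    rw [List.mem_ofFn] at hx
    obtain ⟨j, rfl⟩ := hx
    exact hf _ (by simp [Fin.natAdd])
  rw [h1, mul_one]
  have : (List.ofFn fun i : Fin 3 => f (Fin.castAdd m i))
      = [f ⟨0, by omega⟩, f ⟨1, by omega⟩, f ⟨2, by omega⟩] := by
    simp [List.ofFn_succ]
    refine ⟨rfl, rfl, rfl⟩
  rw [show (List.ofFn fun i : Fin 3 => f (Fin.castLE (by omega) i)) = _ from this]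
  simp [mul_assoc]

lemma Mneg_one {n : ℕ} (Z : Matrix (Fin n) (Fin n) ℂ) :
    MnegAZ (1 : Matrix (Fin n) (Fin n) ℂ) Z = Matrix.fromBlocks 1 0 Z 1 := by
  unfold MnegAZ
  rw [transpose_one, inv_one, Matrix.fromBlocks_one, mul_one]

lemma Mpos_one {n : ℕ} (Z : Matrix (Fin n) (Fin n) ℂ) :
    MposAZ (1 : Matrix (Fin n) (Fin n) ℂ) Z = Matrix.fromBlocks 1 Z 0 1 := by
  unfold MposAZ
  rw [transpose_one, inv_one, Matrix.fromBlocks_one, mul_one]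

end Helpers

theorem stmt5 (n K : ℕ) (hn : 2 ≤ n) (hK : 3 ≤ K)
    (ab : Fin n ⊕ Fin n → ℂ) (hab : ab ≠ 0) :
    ∃ A Z : Fin K → Matrix (Fin n) (Fin n) ℂ,
      (∀ k, IsUpperUnitriangular (A k)) ∧
      (∀ k, (Z k).IsSymm) ∧
      -- the tuple ((A₁,Z₁),…,(A_K,Z_K)) does not lie in S_K
      ¬ ((∀ i : Fin K, (i : ℕ) + 1 < K → (Z i).mulVec (en n) = 0) ∧
         (∀ j : Fin K, 0 < (j : ℕ) → (j : ℕ) + 1 < K → (A j).mulVec (en n) = en n)) ∧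
      -- the last row of the alternating product is (a, b)
      Matrix.vecMul (Sum.elim 0 (en n))
        (List.ofFn fun k : Fin K =>
          if (k : ℕ) % 2 = 0 then MnegAZ (A k) (Z k) else MposAZ (A k) (Z k)).prod = ab := by
  obtain ⟨m, rfl⟩ : ∃ m, K = 3 + m := ⟨K - 3, by omega⟩
  set a : Fin n → ℂ := fun i => ab (Sum.inl i) with ha
  set b : Fin n → ℂ := fun i => ab (Sum.inr i) with hb
  have hab' : ab = Sum.elim a b := by ext x; cases x <;> rfl
  have hen : en n ≠ 0 := by
    intro h
    have := congrFun h ⟨n - 1, by omega⟩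
    simp [en] at this
  -- choose z and Z₂
  obtain ⟨z, hz, Z₂, hZ₂s, hZ₂⟩ :
      ∃ z, z ≠ 0 ∧ ∃ Z₂ : Matrix (Fin n) (Fin n) ℂ, Z₂.IsSymm ∧ b ᵥ* Z₂ = a - z := by
    by_cases hb0 : b = 0
    · have ha0 : a ≠ 0 := by
        intro h0
        apply hab
        rw [hab', h0, hb0]
        ext x; cases x <;> rfl
      exact ⟨a, ha0, 0, Matrix.isSymm_zero, by simp [hb0]⟩
    · obtain ⟨Z₂, hs, he⟩ := exists_symm_vecMul b hb0 (a - Pi.single ⟨0, by omega⟩ 1)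
      refine ⟨Pi.single ⟨0, by omega⟩ 1, ?_, Z₂, hs, he⟩
      intro h0
      have := congrFun h0 ⟨0, by omega⟩
      simp at this
  obtain ⟨Z₀, hZ₀s, hZ₀⟩ := exists_symm_vecMul (en n) hen z
  obtain ⟨Z₁, hZ₁s, hZ₁⟩ := exists_symm_vecMul z hz (b - en n)
  refine ⟨fun _ => 1,
    fun k => if (k : ℕ) = 0 then Z₀ else if (k : ℕ) = 1 then Z₁ else
      if (k : ℕ) = 2 then Z₂ else 0, ?_, ?_, ?_, ?_⟩
  · intro k
    exact ⟨fun i => Matrix.one_apply_eq i, fun i j hij => Matrix.one_apply_ne (ne_of_gt hij)⟩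
  · intro k
    dsimp only
    split_ifs <;> first | exact hZ₀s | exact hZ₁s | exact hZ₂s | exact Matrix.isSymm_zero
  · rintro ⟨hP, -⟩
    have h0 := hP ⟨0, by omega⟩ (by simp; omega)
    simp only [Fin.val_mk] at h0
    norm_num at h0
    have hZv : Z₀ *ᵥ en n = z := by
      rw [← hZ₀s.eq, Matrix.mulVec_transpose, hZ₀]
    rw [hZv] at h0
    exact hz h0
  · rw [prod_head3]
    · simp only [Fin.val_mk]
      norm_num
      rw [Mneg_one, Mpos_one, Mneg_one, ← Matrix.vecMul_vecMul, ← Matrix.vecMul_vecMul]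
      have s1 : (Sum.elim 0 (en n) : Fin n ⊕ Fin n → ℂ) ᵥ* Matrix.fromBlocks 1 0 Z₀ 1
          = Sum.elim z (en n) := by
        rw [Matrix.vecMul_fromBlocks]
        simp [hZ₀]
      have s2 : (Sum.elim z (en n) : Fin n ⊕ Fin n → ℂ) ᵥ* Matrix.fromBlocks 1 Z₁ 0 1
          = Sum.elim z b := by
        rw [Matrix.vecMul_fromBlocks]
        simp [hZ₁]
      have s3 : (Sum.elim z b : Fin n ⊕ Fin n → ℂ) ᵥ* Matrix.fromBlocks 1 0 Z₂ 1
          = Sum.elim a b := by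
        rw [Matrix.vecMul_fromBlocks]
        simp only [Sum.elim_comp_inl, Sum.elim_comp_inr, Matrix.zero_vecMul,
          Matrix.vecMul_one, Matrix.vecMul_zero, zero_add, add_zero, hZ₂]
        rw [add_comm z (a - z), sub_add_cancel]
      rw [s1, s2, s3, hab']
    · intro k hk
      have h0 : ¬ (k : ℕ) = 0 := by omega
      have h1 : ¬ (k : ℕ) = 1 := by omega
      have h2 : ¬ (k : ℕ) = 2 := by omega
      simp only [h0, h1, h2, if_false]
      split_ifs
      · rw [Mneg_one, Matrix.fromBlocks_one]
      · rw [Mpos_one, Matrix.fromBlocks_one]
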